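/- Let ℓ ≥ 1 be an integer and set e = 2ℓ. Let λ be a bipartition of n with removable nodes B and C such that res(B) ≠ res(C) and res(B) ≠ res(C) + ℓ. Then there exists s ∈ ℤ/eℤ with N_s(λ∖B) ≠ N_{s+ℓ}(λ∖C). -/

import Mathlib

/-- A cell `a` of a Young diagram `μ` is removable if it belongs to `μ` and deleting it
again yields a Young diagram (i.e. a lower set). -/
def YoungDiagram.IsRemovable (μ : YoungDiagram) (a : ℕ × ℕ) : Prop :=
  a ∈ μ ∧ IsLowerSet ((μ.cells.erase a : Finset (ℕ × ℕ)) : Set (ℕ × ℕ))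

/-- The Young diagram obtained by removing a removable cell. -/
def YoungDiagram.eraseCell (μ : YoungDiagram) (a : ℕ × ℕ) (h : μ.IsRemovable a) :
    YoungDiagram :=
  ⟨μ.cells.erase a, h.2⟩

/-- A bipartition of `n`: an ordered pair of Young diagrams whose total number of cells
is `n`. -/
structure Bipartition (n : ℕ) where
  fst : YoungDiagram
  snd : YoungDiagram
  card_eq : fst.card + snd.card = n

namespace Bipartition

/-- The bipartition `λ^` obtained by swapping the two components. -/
def swap {n : ℕ} (l : Bipartition n) : Bipartition n :=
  ⟨l.snd, l.fst, by have := l.card_eq; omega⟩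

/-- The component of a bipartition indexed by `c : Bool`
(`false` = first component, `true` = second component). -/
def component {n : ℕ} (l : Bipartition n) (c : Bool) : YoungDiagram :=
  cond c l.snd l.fst

/-- A node `(c, i, j)` of a bipartition is removable if the corresponding cell of the
component indexed by `c` is removable. -/
def IsRemovable {n : ℕ} (l : Bipartition n) (A : Bool × ℕ × ℕ) : Prop :=
  (l.component A.1).IsRemovable A.2

/-- The bipartition of `n - 1` obtained by removing a removable node. -/
def erase {n : ℕ} (l : Bipartition n) :
    (A : Bool × ℕ × ℕ) → l.IsRemovable A → Bipartition (n - 1)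
  | (false, a), h =>
      ⟨l.fst.eraseCell a h, l.snd, by
        have hc := l.card_eq
        have ha : a ∈ l.fst.cells := h.1
        have hpos : 0 < l.fst.card := Finset.card_pos.2 ⟨a, ha⟩
        simp only [YoungDiagram.eraseCell, YoungDiagram.card,
          Finset.card_erase_of_mem ha] at *
        omega⟩
  | (true, a), h =>
      ⟨l.fst, l.snd.eraseCell a h, by
        have hc := l.card_eq
        have ha : a ∈ l.snd.cells := h.1
        have hpos : 0 < l.snd.card := Finset.card_pos.2 ⟨a, ha⟩
        simp only [YoungDiagram.eraseCell, YoungDiagram.card,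
          Finset.card_erase_of_mem ha] at *
        omega⟩

end Bipartition


/-- The residue of a node `(c, i, j)`: the class of `j - i` in `ℤ/eℤ`. -/
def nodeRes (e : ℕ) (A : Bool × ℕ × ℕ) : ZMod e :=
  (A.2.2 : ZMod e) - (A.2.1 : ZMod e)

/-- `N_s(μ)`: the number of nodes of the bipartition `μ` whose residue is `s ∈ ℤ/eℤ`. -/
def Bipartition.count {n : ℕ} (e : ℕ) (l : Bipartition n) (s : ZMod e) : ℕ :=
  (l.fst.cells.filter fun a => ((a.2 : ZMod e) - (a.1 : ZMod e)) = s).card +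
    (l.snd.cells.filter fun a => ((a.2 : ZMod e) - (a.1 : ZMod e)) = s).card


lemma count_erase_key {n : ℕ} (e : ℕ) (l : Bipartition n) (A : Bool × ℕ × ℕ)
    (h : l.IsRemovable A) (s : ZMod e) :
    (l.erase A h).count e s + (if nodeRes e A = s then 1 else 0) = l.count e s := by
  obtain ⟨c, a⟩ := A
  have key : ∀ (t : Finset (ℕ × ℕ)), a ∈ t →
      ((t.erase a).filter (fun x => ((x.2 : ZMod e) - (x.1 : ZMod e)) = s)).card
        + (if ((a.2 : ZMod e) - (a.1 : ZMod e)) = s then 1 else 0)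
        = (t.filter (fun x => ((x.2 : ZMod e) - (x.1 : ZMod e)) = s)).card := by
    intro t ha
    rw [Finset.filter_erase]
    by_cases hp : ((a.2 : ZMod e) - (a.1 : ZMod e)) = s
    · have hm : a ∈ t.filter (fun x => ((x.2 : ZMod e) - (x.1 : ZMod e)) = s) :=
        Finset.mem_filter.2 ⟨ha, hp⟩
      rw [if_pos hp, Finset.card_erase_of_mem hm]
      have : 0 < (t.filter (fun x => ((x.2 : ZMod e) - (x.1 : ZMod e)) = s)).card :=
        Finset.card_pos.2 ⟨a, hm⟩
      omega
    · have hnm : a ∉ t.filter (fun x => ((x.2 : ZMod e) - (x.1 : ZMod e)) = s) :=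
        fun hm => hp (Finset.mem_filter.1 hm).2
      rw [if_neg hp, Finset.erase_eq_of_notMem hnm, add_zero]
  cases c
  · have ha : a ∈ l.fst.cells := h.1
    have hk := congrArg (· + (l.snd.cells.filter
        (fun x => ((x.2 : ZMod e) - (x.1 : ZMod e)) = s)).card) (key l.fst.cells ha)
    simp [Bipartition.erase, Bipartition.count, YoungDiagram.eraseCell, nodeRes,
      add_right_comm] at hk ⊢
    convert hk using 3
    split_ifs <;> simp_all
  · have ha : a ∈ l.snd.cells := h.1
    have hk := congrArg ((l.fst.cells.filter
        (fun x => ((x.2 : ZMod e) - (x.1 : ZMod e)) = s)).card + ·) (key l.snd.cells ha)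
    simp [Bipartition.erase, Bipartition.count, YoungDiagram.eraseCell, nodeRes,
      add_assoc] at hk ⊢
    convert hk using 3
    split_ifs <;> simp_all

/-- Let `ℓ ≥ 1`, `e = 2ℓ`, and let `λ` be a bipartition of `n` with
removable nodes `B, C` such that `res B ≠ res C` and `res B ≠ res C + ℓ`. Then there
exists `s ∈ ℤ/eℤ` with `N_s(λ∖B) ≠ N_{s+ℓ}(λ∖C)`. -/
theorem stmt6 (ℓ : ℕ) (hℓ : 1 ≤ ℓ) {n : ℕ} (l : Bipartition n)
    (B C : Bool × ℕ × ℕ)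
    (hB : l.IsRemovable B) (hC : l.IsRemovable C)
    (hr1 : nodeRes (2 * ℓ) B ≠ nodeRes (2 * ℓ) C)
    (hr2 : nodeRes (2 * ℓ) B ≠ nodeRes (2 * ℓ) C + (ℓ : ZMod (2 * ℓ))) :
    ∃ s : ZMod (2 * ℓ),
      (l.erase B hB).count (2 * ℓ) s ≠
        (l.erase C hC).count (2 * ℓ) (s + (ℓ : ZMod (2 * ℓ))) := by
  by_contra hcon
  push_neg at hcon
  set e := 2 * ℓ
  have hll : (ℓ : ZMod e) + (ℓ : ZMod e) = 0 := by
    rw [← Nat.cast_add, show ℓ + ℓ = e from (two_mul ℓ).symm, ZMod.natCast_self]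
  have star : ∀ s : ZMod e,
      l.count e s + (if nodeRes e C = s + (ℓ : ZMod e) then 1 else 0)
        = l.count e (s + (ℓ : ZMod e)) + (if nodeRes e B = s then 1 else 0) := by
    intro s
    have h1 := count_erase_key e l B hB s
    have h2 := count_erase_key e l C hC (s + (ℓ : ZMod e))
    have h3 := hcon s
    omega
  have s1 := star (nodeRes e B)
  have s2 := star (nodeRes e B + (ℓ : ZMod e))
  rw [add_assoc, hll, add_zero] at s2
  have e1 : (if nodeRes e C = nodeRes e B + (ℓ : ZMod e) then 1 else 0) = 0 := by
    rw [if_neg]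
    intro hc
    exact hr2 (by rw [hc, add_assoc, hll, add_zero])
  have e2 : (if nodeRes e C = nodeRes e B then 1 else 0) = 0 := by
    rw [if_neg (fun hc => hr1 hc.symm)]
  have e3 : (if nodeRes e B = nodeRes e B then 1 else 0) = 1 := if_pos rfl
  omega
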